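/- Let f ∈ H and let u_e ∈ V be a weak solution of the steady sabra shell model ν Au_e + B(u_e,u_e) = f. Then u_e ∈ D(A), and |Au_e|² ≤ (4C₁²/ν²)‖u_e‖²|u_e|² + (4/ν²)|f|². -/

import Mathlib

open scoped BigOperators

/-- Wave numbers `kₙ = k₀ λⁿ`. -/
noncomputable def kk (k0 lam : ℝ) (n : ℤ) : ℝ := k0 * lam ^ n

/-- The sabra shell model bilinear operator `B(u,v)ₙ`. -/
noncomputable def sabraB (a b k0 lam : ℝ) (u v : ℤ → ℂ) (n : ℤ) : ℂ :=
  if 1 ≤ n then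
    -Complex.I *
      ((a : ℂ) * (kk k0 lam (n + 1) : ℂ) * v (n + 2) * (starRingEnd ℂ) (u (n + 1))
        + (b : ℂ) * (kk k0 lam n : ℂ) * v (n + 1) * (starRingEnd ℂ) (u (n - 1))
        + (a : ℂ) * (kk k0 lam (n - 1) : ℂ) * u (n - 1) * v (n - 2)
        + (b : ℂ) * (kk k0 lam (n - 1) : ℂ) * v (n - 1) * u (n - 2))
  else 0


/-- `ue` is a weak solution of the steady sabra shell model `ν A u + B(u,u) = f`:
`ue ∈ V`, vanishes for nonpositive indices, and the weak formulation
`ν⟨A ue, v⟩ + ⟨B(ue,ue), v⟩ = ⟨f, v⟩` holds for all `v ∈ V`. -/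
def IsSteadyWeakSol (a b ν k0 lam : ℝ) (f ue : ℤ → ℂ) : Prop :=
  (∀ n : ℤ, n ≤ 0 → ue n = 0) ∧
  (Summable fun n : ℤ => (kk k0 lam n) ^ 2 * ‖ue n‖ ^ 2) ∧
  ∀ v : ℤ → ℂ, (Summable fun n : ℤ => (kk k0 lam n) ^ 2 * ‖v n‖ ^ 2) →
    (ν : ℂ) * ∑' n : ℤ, ((kk k0 lam n : ℝ) : ℂ) ^ 2 * ue n * (starRingEnd ℂ) (v n)
      + ∑' n : ℤ, sabraB a b k0 lam ue ue n * (starRingEnd ℂ) (v n)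
      = ∑' n : ℤ, f n * (starRingEnd ℂ) (v n)

private lemma kk_pos' (k0 lam : ℝ) (hk0 : 0 < k0) (hlam : 0 < lam) (n : ℤ) : 0 < kk k0 lam n :=
  mul_pos hk0 (zpow_pos hlam n)

private lemma kk_succ' (k0 lam : ℝ) (hlam : 0 < lam) (n : ℤ) :
    kk k0 lam (n+1) = lam * kk k0 lam n := by
  unfold kk; rw [zpow_add_one₀ (ne_of_gt hlam)]; ring

private lemma sabraB_norm_le' (a b k0 lam : ℝ) (hk0 : 0 < k0) (hlam : 0 < lam) (u : ℤ → ℂ)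
    (n : ℤ) (hn : 1 ≤ n) :
    ‖sabraB a b k0 lam u u n‖ ≤
      |a| * kk k0 lam (n+1) * ‖u (n+2)‖ * ‖u (n+1)‖
      + |b| * kk k0 lam n * ‖u (n+1)‖ * ‖u (n-1)‖
      + |a| * kk k0 lam (n-1) * ‖u (n-1)‖ * ‖u (n-2)‖
      + |b| * kk k0 lam (n-1) * ‖u (n-1)‖ * ‖u (n-2)‖ := by
  have hK : ∀ m : ℤ, 0 < kk k0 lam m := fun m => kk_pos' k0 lam hk0 hlam m
  unfold sabraB
  rw [if_pos hn, norm_mul]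
  have hI : ‖(-Complex.I)‖ = 1 := by simp
  rw [hI, one_mul]
  have h4 : ∀ t1 t2 t3 t4 : ℂ, ‖t1+t2+t3+t4‖ ≤ ‖t1‖+‖t2‖+‖t3‖+‖t4‖ := by
    intro t1 t2 t3 t4
    calc ‖t1+t2+t3+t4‖ ≤ ‖t1+t2+t3‖+‖t4‖ := norm_add_le _ _
    _ ≤ ‖t1+t2‖+‖t3‖+‖t4‖ := by gcongr; exact norm_add_le _ _
    _ ≤ ‖t1‖+‖t2‖+‖t3‖+‖t4‖ := by gcongr; exact norm_add_le _ _
  refine (h4 _ _ _ _).trans (le_of_eq ?_)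
  simp only [norm_mul, Complex.norm_real, Real.norm_eq_abs, RCLike.norm_conj,
    abs_of_pos (hK _)]

private lemma pointwise_eq' (a b ν k0 lam : ℝ) (f ue : ℤ → ℂ)
    (hue : IsSteadyWeakSol a b ν k0 lam f ue) (m : ℤ) :
    (ν : ℂ) * ((kk k0 lam m : ℝ) : ℂ) ^ 2 * ue m + sabraB a b k0 lam ue ue m = f m := by
  obtain ⟨hzero, hV, hweak⟩ := hue
  set v : ℤ → ℂ := fun n => if n = m then 1 else 0 with hv
  have hvs : Summable fun n : ℤ => (kk k0 lam n)^2 * ‖v n‖^2 := by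
    apply summable_of_ne_finset_zero (s := ({m} : Finset ℤ))
    intro n hn
    simp only [Finset.mem_singleton] at hn
    simp [hv, hn]
  have h := hweak v hvs
  have e1 : (∑' n : ℤ, ((kk k0 lam n : ℝ):ℂ)^2 * ue n * (starRingEnd ℂ) (v n))
      = ((kk k0 lam m:ℝ):ℂ)^2 * ue m := by
    rw [tsum_eq_single m (fun n hn => by simp [hv, hn])]
    simp [hv]
  have e2 : (∑' n : ℤ, sabraB a b k0 lam ue ue n * (starRingEnd ℂ) (v n))
      = sabraB a b k0 lam ue ue m := by
    rw [tsum_eq_single m (fun n hn => by simp [hv, hn])]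
    simp [hv]
  have e3 : (∑' n : ℤ, f n * (starRingEnd ℂ) (v n)) = f m := by
    rw [tsum_eq_single m (fun n hn => by simp [hv, hn])]
    simp [hv]
  rw [e1, e2, e3] at h
  rw [← h]; ring

set_option maxHeartbeats 1000000 in
/-- if `f ∈ H` and `u_e ∈ V` is a weak solution of the steady sabra shell
model, then `u_e ∈ D(A)` and `|Au_e|² ≤ (4C₁²/ν²)‖u_e‖²|u_e|² + (4/ν²)|f|²`,
where `C₁ = |a|(λ⁻¹+λ) + |b|(λ⁻¹+1)`. -/
theorem steady_regularity (a b ν k0 lam : ℝ) (hν : 0 < ν) (hk0 : 0 < k0) (hlam : 1 < lam)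
    (f : ℤ → ℂ) (hf : Summable fun n : ℤ => ‖f n‖ ^ 2)
    (ue : ℤ → ℂ) (hue : IsSteadyWeakSol a b ν k0 lam f ue) :
    Summable (fun n : ℤ => (kk k0 lam n) ^ 4 * ‖ue n‖ ^ 2) ∧
      (∑' n : ℤ, (kk k0 lam n) ^ 4 * ‖ue n‖ ^ 2) ≤
        (4 * (|a| * (lam⁻¹ + lam) + |b| * (lam⁻¹ + 1)) ^ 2 / ν ^ 2) *
            (∑' n : ℤ, (kk k0 lam n) ^ 2 * ‖ue n‖ ^ 2) * (∑' n : ℤ, ‖ue n‖ ^ 2)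
          + (4 / ν ^ 2) * ∑' n : ℤ, ‖f n‖ ^ 2 := by
  have hlam0 : (0:ℝ) < lam := lt_trans one_pos hlam
  obtain ⟨hzero, hV, hweak⟩ := hue
  have hKpos : ∀ n : ℤ, 0 < kk k0 lam n := kk_pos' k0 lam hk0 hlam0
  -- notation
  set U : ℤ → ℝ := fun n => ‖ue n‖ with hUdef
  set W : ℤ → ℝ := fun n => kk k0 lam n * U n with hWdef
  set c1 : ℝ := |a| / lam with hc1def
  set c2 : ℝ := |b| / lam with hc2def
  set c3 : ℝ := |a| * lam with hc3def
  set c4 : ℝ := |b| with hc4def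
  have hc1 : 0 ≤ c1 := div_nonneg (abs_nonneg a) hlam0.le
  have hc2 : 0 ≤ c2 := div_nonneg (abs_nonneg b) hlam0.le
  have hc3 : 0 ≤ c3 := mul_nonneg (abs_nonneg a) hlam0.le
  have hc4 : 0 ≤ c4 := abs_nonneg b
  set C1 : ℝ := |a| * (lam⁻¹ + lam) + |b| * (lam⁻¹ + 1) with hC1def
  have hC1eq : C1 = c1 + c2 + c3 + c4 := by
    rw [hC1def, hc1def, hc2def, hc3def, hc4def]
    field_simp
    ring
  have hC1 : 0 ≤ C1 := by rw [hC1eq]; linarith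
  -- summability facts
  have hS1 : Summable fun n : ℤ => W n ^ 2 := by
    have : (fun n : ℤ => W n ^ 2) = fun n => (kk k0 lam n) ^ 2 * ‖ue n‖ ^ 2 := by
      funext n; rw [hWdef]; ring
    rw [this]; exact hV
  have hS0 : Summable fun n : ℤ => U n ^ 2 := by
    refine Summable.of_nonneg_of_le (fun n => sq_nonneg _) ?_
      (hV.mul_left ((k0*lam)⁻¹^2))
    intro n
    rcases le_or_gt n 0 with h | h
    · have : ue n = 0 := hzero n h
      simp [hUdef, this]
    · have h1 : (1:ℤ) ≤ n := h
      have hkl : 0 < k0 * lam := mul_pos hk0 hlam0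
      have hk : k0 * lam ≤ kk k0 lam n := by
        unfold kk
        have h2 : lam ^ (1:ℤ) ≤ lam ^ n := zpow_le_zpow_right₀ hlam.le h1
        have h3 : lam ^ (1:ℤ) = lam := zpow_one lam
        have h4 := mul_le_mul_of_nonneg_left h2 hk0.le
        rw [h3] at h4
        linarith
      have h3 : (1:ℝ) ≤ (k0*lam)⁻¹ * kk k0 lam n := by
        rw [inv_mul_eq_div, le_div_iff₀ hkl]; linarith
      have h4 : (1:ℝ) ≤ ((k0*lam)⁻¹ * kk k0 lam n)^2 := by nlinarith
      have h5 : U n ^ 2 ≤ ((k0*lam)⁻¹ * kk k0 lam n)^2 * U n ^ 2 := by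
        nlinarith [sq_nonneg (U n)]
      calc U n ^ 2 ≤ ((k0*lam)⁻¹ * kk k0 lam n)^2 * U n ^ 2 := h5
      _ = (k0*lam)⁻¹^2 * ((kk k0 lam n)^2 * ‖ue n‖^2) := by rw [hUdef]; ring
  set S0 : ℝ := ∑' n : ℤ, U n ^ 2 with hS0def
  set S1 : ℝ := ∑' n : ℤ, W n ^ 2 with hS1def
  have hS0nn : 0 ≤ S0 := tsum_nonneg (fun n => sq_nonneg _)
  have hS1nn : 0 ≤ S1 := tsum_nonneg (fun n => sq_nonneg _)
  have hUle : ∀ n : ℤ, U n ^ 2 ≤ S0 := fun n => Summable.le_tsum hS0 n (fun j _ => sq_nonneg _)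
  have hshiftA : ∀ d : ℤ, Summable (fun n : ℤ => W (n + d) ^ 2) := by
    intro d
    have h1 : Summable ((fun n : ℤ => W n ^ 2) ∘ (Equiv.addRight d)) :=
      ((Equiv.addRight d).summable_iff).2 hS1
    exact h1
  have hshiftS : ∀ d : ℤ, Summable (fun n : ℤ => W (n - d) ^ 2) := by
    intro d
    have h1 : Summable ((fun n : ℤ => W n ^ 2) ∘ (Equiv.subRight d)) :=
      ((Equiv.subRight d).summable_iff).2 hS1
    exact h1
  have htshiftA : ∀ d : ℤ, (∑' n : ℤ, W (n + d)^2) = S1 := fun d =>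
    (Equiv.addRight d).tsum_eq (fun n => W n ^ 2)
  have htshiftS : ∀ d : ℤ, (∑' n : ℤ, W (n - d)^2) = S1 := fun d =>
    (Equiv.subRight d).tsum_eq (fun n => W n ^ 2)
  -- the majorant G
  set G : ℤ → ℝ := fun m => C1 * S0 *
    (c1 * W (m+2)^2 + c2 * W (m+1)^2 + c3 * W (m-2)^2 + c4 * W (m-1)^2) with hGdef
  have hA1 : Summable fun m : ℤ => c1 * W (m+2)^2 := (hshiftA 2).mul_left c1
  have hA2 : Summable fun m : ℤ => c2 * W (m+1)^2 := (hshiftA 1).mul_left c2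
  have hA3 : Summable fun m : ℤ => c3 * W (m-2)^2 := (hshiftS 2).mul_left c3
  have hA4 : Summable fun m : ℤ => c4 * W (m-1)^2 := (hshiftS 1).mul_left c4
  have hGsum : Summable G := by
    have : Summable fun m : ℤ =>
        (c1 * W (m+2)^2 + c2 * W (m+1)^2 + c3 * W (m-2)^2 + c4 * W (m-1)^2) :=
      ((hA1.add hA2).add hA3).add hA4
    exact this.mul_left _
  have hGtsum : (∑' m : ℤ, G m) = C1 * C1 * S0 * S1 := by
    rw [hGdef]
    rw [tsum_mul_left]
    rw [Summable.tsum_add ((hA1.add hA2).add hA3) hA4, Summable.tsum_add (hA1.add hA2) hA3, Summable.tsum_add hA1 hA2]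
    rw [tsum_mul_left, tsum_mul_left, tsum_mul_left, tsum_mul_left]
    rw [htshiftA 2, htshiftA 1, htshiftS 2, htshiftS 1]
    rw [hC1eq]; ring
  have hGnn : ∀ m : ℤ, 0 ≤ G m := by
    intro m
    rw [hGdef]
    have : 0 ≤ c1 * W (m+2)^2 + c2 * W (m+1)^2 + c3 * W (m-2)^2 + c4 * W (m-1)^2 := by
      have := sq_nonneg (W (m+2)); have := sq_nonneg (W (m+1))
      have := sq_nonneg (W (m-2)); have := sq_nonneg (W (m-1))
      nlinarith
    exact mul_nonneg (mul_nonneg hC1 hS0nn) this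
  -- pointwise bound on B
  have hBG : ∀ m : ℤ, ‖sabraB a b k0 lam ue ue m‖^2 ≤ G m := by
    intro m
    rcases lt_or_ge m 1 with h | h
    · have hB0 : sabraB a b k0 lam ue ue m = 0 := by
        unfold sabraB; rw [if_neg (by omega)]
      rw [hB0]; simpa using hGnn m
    · have hb := sabraB_norm_le' a b k0 lam hk0 hlam0 ue m h
      set x1 : ℝ := W (m+2) * U (m+1) with hx1
      set x2 : ℝ := W (m+1) * U (m-1) with hx2
      set x3 : ℝ := W (m-2) * U (m-1) with hx3
      set x4 : ℝ := W (m-1) * U (m-2) with hx4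
      have hrw : |a| * kk k0 lam (m+1) * ‖ue (m+2)‖ * ‖ue (m+1)‖
          + |b| * kk k0 lam m * ‖ue (m+1)‖ * ‖ue (m-1)‖
          + |a| * kk k0 lam (m-1) * ‖ue (m-1)‖ * ‖ue (m-2)‖
          + |b| * kk k0 lam (m-1) * ‖ue (m-1)‖ * ‖ue (m-2)‖
          = c1*x1 + c2*x2 + c3*x3 + c4*x4 := by
        have e1 : kk k0 lam (m+2) = lam * kk k0 lam (m+1) := by
          have := kk_succ' k0 lam hlam0 (m+1)
          convert this using 2; ring
        have e2 : kk k0 lam (m+1) = lam * kk k0 lam m := kk_succ' k0 lam hlam0 m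
        have e3 : kk k0 lam (m-1) = lam * kk k0 lam (m-2) := by
          have := kk_succ' k0 lam hlam0 (m-2)
          convert this using 2; ring
        rw [hx1, hx2, hx3, hx4, hWdef, hUdef]
        simp only
        rw [e1, e2, e3, hc1def, hc2def, hc3def, hc4def]
        field_simp
      rw [hrw] at hb
      have hx1n : 0 ≤ x1 := mul_nonneg (mul_nonneg (hKpos _).le (norm_nonneg _)) (norm_nonneg _)
      have hx2n : 0 ≤ x2 := mul_nonneg (mul_nonneg (hKpos _).le (norm_nonneg _)) (norm_nonneg _)
      have hx3n : 0 ≤ x3 := mul_nonneg (mul_nonneg (hKpos _).le (norm_nonneg _)) (norm_nonneg _)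
      have hx4n : 0 ≤ x4 := mul_nonneg (mul_nonneg (hKpos _).le (norm_nonneg _)) (norm_nonneg _)
      have hsq : ‖sabraB a b k0 lam ue ue m‖^2 ≤ (c1*x1 + c2*x2 + c3*x3 + c4*x4)^2 :=
        pow_le_pow_left₀ (norm_nonneg _) hb 2
      have hcs : (c1*x1 + c2*x2 + c3*x3 + c4*x4)^2
          ≤ (c1+c2+c3+c4) * (c1*x1^2 + c2*x2^2 + c3*x3^2 + c4*x4^2) := by
        nlinarith [mul_nonneg (mul_nonneg hc1 hc2) (sq_nonneg (x1-x2)),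
          mul_nonneg (mul_nonneg hc1 hc3) (sq_nonneg (x1-x3)),
          mul_nonneg (mul_nonneg hc1 hc4) (sq_nonneg (x1-x4)),
          mul_nonneg (mul_nonneg hc2 hc3) (sq_nonneg (x2-x3)),
          mul_nonneg (mul_nonneg hc2 hc4) (sq_nonneg (x2-x4)),
          mul_nonneg (mul_nonneg hc3 hc4) (sq_nonneg (x3-x4))]
      have hxb1 : x1^2 ≤ S0 * W (m+2)^2 := by
        rw [hx1, mul_pow]
        calc W (m+2)^2 * U (m+1)^2 ≤ W (m+2)^2 * S0 :=
              mul_le_mul_of_nonneg_left (hUle (m+1)) (sq_nonneg _)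
        _ = S0 * W (m+2)^2 := mul_comm _ _
      have hxb2 : x2^2 ≤ S0 * W (m+1)^2 := by
        rw [hx2, mul_pow]
        calc W (m+1)^2 * U (m-1)^2 ≤ W (m+1)^2 * S0 :=
              mul_le_mul_of_nonneg_left (hUle (m-1)) (sq_nonneg _)
        _ = S0 * W (m+1)^2 := mul_comm _ _
      have hxb3 : x3^2 ≤ S0 * W (m-2)^2 := by
        rw [hx3, mul_pow]
        calc W (m-2)^2 * U (m-1)^2 ≤ W (m-2)^2 * S0 :=
              mul_le_mul_of_nonneg_left (hUle (m-1)) (sq_nonneg _)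
        _ = S0 * W (m-2)^2 := mul_comm _ _
      have hxb4 : x4^2 ≤ S0 * W (m-1)^2 := by
        rw [hx4, mul_pow]
        calc W (m-1)^2 * U (m-2)^2 ≤ W (m-1)^2 * S0 :=
              mul_le_mul_of_nonneg_left (hUle (m-2)) (sq_nonneg _)
        _ = S0 * W (m-1)^2 := mul_comm _ _
      have hfin : (c1+c2+c3+c4) * (c1*x1^2 + c2*x2^2 + c3*x3^2 + c4*x4^2) ≤ G m := by
        have t1 := mul_le_mul_of_nonneg_left hxb1 hc1
        have t2 := mul_le_mul_of_nonneg_left hxb2 hc2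
        have t3 := mul_le_mul_of_nonneg_left hxb3 hc3
        have t4 := mul_le_mul_of_nonneg_left hxb4 hc4
        have hmid : c1*x1^2 + c2*x2^2 + c3*x3^2 + c4*x4^2
            ≤ S0 * (c1 * W (m+2)^2 + c2 * W (m+1)^2 + c3 * W (m-2)^2 + c4 * W (m-1)^2) := by
          ring_nf
          ring_nf at t1 t2 t3 t4
          linarith
        have hCnn : (0:ℝ) ≤ c1+c2+c3+c4 := by linarith
        calc (c1+c2+c3+c4) * (c1*x1^2 + c2*x2^2 + c3*x3^2 + c4*x4^2)
            ≤ (c1+c2+c3+c4) * (S0 * (c1 * W (m+2)^2 + c2 * W (m+1)^2 + c3 * W (m-2)^2 + c4 * W (m-1)^2)) :=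
              mul_le_mul_of_nonneg_left hmid hCnn
        _ = G m := by rw [hGdef]; simp only; rw [hC1eq]; ring
      linarith
  -- pointwise bound on kk^4 * U^2
  have hν2 : (0:ℝ) < ν^2 := by positivity
  have hfb : ∀ m : ℤ, (kk k0 lam m)^4 * ‖ue m‖^2
      ≤ (2/ν^2) * ‖f m‖^2 + (2/ν^2) * G m := by
    intro m
    have hpt := pointwise_eq' a b ν k0 lam f ue ⟨hzero, hV, hweak⟩ m
    have heq : (ν:ℂ) * ((kk k0 lam m : ℝ):ℂ)^2 * ue m
        = f m - sabraB a b k0 lam ue ue m := by rw [← hpt]; ring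
    have hnorm : ν * (kk k0 lam m)^2 * ‖ue m‖ = ‖f m - sabraB a b k0 lam ue ue m‖ := by
      rw [← heq]
      rw [norm_mul, norm_mul, norm_pow, Complex.norm_real, Complex.norm_real,
        Real.norm_eq_abs, Real.norm_eq_abs, abs_of_pos hν, abs_of_pos (hKpos m)]
    have htri : ‖f m - sabraB a b k0 lam ue ue m‖ ≤ ‖f m‖ + ‖sabraB a b k0 lam ue ue m‖ :=
      norm_sub_le _ _
    have hB2 := hBG m
    have hA : (ν * (kk k0 lam m)^2 * ‖ue m‖)^2 = ‖f m - sabraB a b k0 lam ue ue m‖^2 := by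
      rw [hnorm]
    have h1 : ‖f m - sabraB a b k0 lam ue ue m‖^2
        ≤ (‖f m‖ + ‖sabraB a b k0 lam ue ue m‖)^2 :=
      pow_le_pow_left₀ (norm_nonneg _) htri 2
    have h2 : (‖f m‖ + ‖sabraB a b k0 lam ue ue m‖)^2
        ≤ 2*‖f m‖^2 + 2*‖sabraB a b k0 lam ue ue m‖^2 := by
      nlinarith [sq_nonneg (‖f m‖ - ‖sabraB a b k0 lam ue ue m‖)]
    rw [div_mul_eq_mul_div, div_mul_eq_mul_div, ← add_div, le_div_iff₀ hν2]
    nlinarith [hA, h1, h2, hB2]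
  -- conclude
  have hbound : Summable fun m : ℤ => (2/ν^2) * ‖f m‖^2 + (2/ν^2) * G m :=
    (hf.mul_left _).add (hGsum.mul_left _)
  have hsummable : Summable (fun n : ℤ => (kk k0 lam n) ^ 4 * ‖ue n‖ ^ 2) := by
    apply Summable.of_nonneg_of_le _ hfb hbound
    intro n
    positivity
  refine ⟨hsummable, ?_⟩
  have hle : (∑' n : ℤ, (kk k0 lam n) ^ 4 * ‖ue n‖ ^ 2)
      ≤ ∑' m : ℤ, ((2/ν^2) * ‖f m‖^2 + (2/ν^2) * G m) :=
    Summable.tsum_le_tsum hfb hsummable hbound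
  rw [Summable.tsum_add (hf.mul_left _) (hGsum.mul_left _), tsum_mul_left, tsum_mul_left, hGtsum] at hle
  have hFnn : 0 ≤ ∑' n : ℤ, ‖f n‖^2 := tsum_nonneg (fun n => sq_nonneg _)
  have hSrw : (∑' n : ℤ, (kk k0 lam n) ^ 2 * ‖ue n‖ ^ 2) = S1 := by
    rw [hS1def]
    congr 1
    funext n; rw [hWdef]; simp only; rw [hUdef]; ring
  have hS0rw : (∑' n : ℤ, ‖ue n‖ ^ 2) = S0 := by
    rw [hS0def]
  rw [hSrw]
  have hkey : C1 * C1 * S0 * S1 = C1^2 * S0 * S1 := by ring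
  have h2 : (2/ν^2) * (C1 * C1 * S0 * S1) ≤ (4 * C1^2 / ν^2) * S1 * S0 := by
    rw [div_mul_eq_mul_div, div_mul_eq_mul_div, div_mul_eq_mul_div, div_le_div_iff₀ hν2 hν2]
    nlinarith [mul_nonneg (mul_nonneg (mul_nonneg (sq_nonneg C1) hS0nn) hS1nn) hν2.le]
  have h3 : (2/ν^2) * (∑' n : ℤ, ‖f n‖^2) ≤ (4/ν^2) * (∑' n : ℤ, ‖f n‖^2) := by
    apply mul_le_mul_of_nonneg_right _ hFnn
    apply div_le_div_of_nonneg_right (by norm_num) hν2.le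
  linarith
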